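/- Let M ≥ 2 be an even integer and N ≥ 4 an integer divisible by 4. Then the Linogram Fourier Domain 𝔏_{M,N}, viewed as a finite subset of ℝ², has exactly (M−1)N + 1 distinct points. -/

import Mathlib

open Real

/-- The "horizontal" part of the Linogram Fourier Domain:
`𝔥_{M,N} := {(2πI/M, (2πI/M)(4J/N)) : −N/4+1 ≤ J ≤ N/4, −M/2 ≤ I ≤ M/2−1}`. -/
def linogramH (M N : ℕ) : Set (ℝ × ℝ) :=
  {p | ∃ I J : ℤ, -(M : ℤ) / 2 ≤ I ∧ I ≤ (M : ℤ) / 2 - 1 ∧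
    -(N : ℤ) / 4 + 1 ≤ J ∧ J ≤ (N : ℤ) / 4 ∧
    p = (2 * π * I / M, (2 * π * I / M) * (4 * J / N))}

/-- The "vertical" part of the Linogram Fourier Domain:
`𝔳_{M,N} := {((2πI/M)(4J/N), 2πI/M) : −N/4 ≤ J ≤ N/4−1, −M/2+1 ≤ I ≤ M/2}`. -/
def linogramV (M N : ℕ) : Set (ℝ × ℝ) :=
  {p | ∃ I J : ℤ, -(M : ℤ) / 2 + 1 ≤ I ∧ I ≤ (M : ℤ) / 2 ∧
    -(N : ℤ) / 4 ≤ J ∧ J ≤ (N : ℤ) / 4 - 1 ∧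
    p = ((2 * π * I / M) * (4 * J / N), 2 * π * I / M)}

/-- The Linogram Fourier Domain `𝔏_{M,N} := 𝔥_{M,N} ∪ 𝔳_{M,N}`. -/
def LFD (M N : ℕ) : Set (ℝ × ℝ) := linogramH M N ∪ linogramV M N

lemma finite_param (M N : ℕ) (a b c d : ℤ) :
    {p : ℝ × ℝ | ∃ I J : ℤ, a ≤ I ∧ I ≤ b ∧ c ≤ J ∧ J ≤ d ∧
      p = (2 * π * I / M, (2 * π * I / M) * (4 * J / N))}.Finite := by
  apply Set.Finite.subset (Set.Finite.image
    (fun q : ℤ × ℤ => ((2 * π * q.1 / M : ℝ), (2 * π * q.1 / M) * (4 * q.2 / N)))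
    ((Finset.Icc a b ×ˢ Finset.Icc c d).finite_toSet))
  rintro p ⟨I, J, h1, h2, h3, h4, rfl⟩
  exact ⟨(I, J), by simp [h1, h2, h3, h4], rfl⟩

lemma ncard_param (M N : ℕ) (hM : 0 < M) (hN : 0 < N) (a b c d : ℤ)
    (ha : a ≤ 0) (hb : 0 ≤ b) (hcd : c ≤ d) :
    {p : ℝ × ℝ | ∃ I J : ℤ, a ≤ I ∧ I ≤ b ∧ c ≤ J ∧ J ≤ d ∧
      p = (2 * π * I / M, (2 * π * I / M) * (4 * J / N))}.ncard
      = (b - a).toNat * (d - c + 1).toNat + 1 := by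
  have hMr : (M:ℝ) ≠ 0 := Nat.cast_ne_zero.2 hM.ne'
  have hNr : (N:ℝ) ≠ 0 := Nat.cast_ne_zero.2 hN.ne'
  set f : ℤ × ℤ → ℝ × ℝ := fun q => (2 * π * q.1 / M, (2 * π * q.1 / M) * (4 * q.2 / N)) with hf
  set T : Finset (ℤ × ℤ) := ((Finset.Icc a b).erase 0) ×ˢ Finset.Icc c d with hT
  have hset : {p : ℝ × ℝ | ∃ I J : ℤ, a ≤ I ∧ I ≤ b ∧ c ≤ J ∧ J ≤ d ∧
      p = (2 * π * I / M, (2 * π * I / M) * (4 * J / N))}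
      = insert ((0:ℝ),(0:ℝ)) (f '' ↑T) := by
    ext p
    simp only [Set.mem_setOf_eq, Set.mem_insert_iff, Set.mem_image, Finset.coe_product,
      Set.mem_prod, Finset.coe_erase, Set.mem_diff, Finset.mem_coe, Finset.mem_Icc,
      Set.mem_singleton_iff, hf, hT]
    constructor
    · rintro ⟨I, J, h1, h2, h3, h4, rfl⟩
      rcases eq_or_ne I 0 with rfl | hI
      · left; simp
      · right; exact ⟨(I, J), ⟨⟨⟨h1, h2⟩, hI⟩, h3, h4⟩, rfl⟩
    · rintro (rfl | ⟨⟨I, J⟩, ⟨⟨⟨h1, h2⟩, hI⟩, h3, h4⟩, rfl⟩)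
      · exact ⟨0, c, ha, hb, le_refl c, hcd, by simp⟩
      · exact ⟨I, J, h1, h2, h3, h4, rfl⟩
  have hnot : ((0:ℝ),(0:ℝ)) ∉ f '' ↑T := by
    rintro ⟨⟨I, J⟩, hmem, heq⟩
    simp only [hT, Finset.coe_product, Set.mem_prod, Finset.coe_erase, Set.mem_diff,
      Finset.mem_coe, Set.mem_singleton_iff] at hmem
    have hI : I ≠ 0 := hmem.1.2
    have h1 : 2 * π * (I:ℝ) / M = 0 := congrArg Prod.fst heq
    have hIr : (I:ℝ) ≠ 0 := Int.cast_ne_zero.2 hI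
    field_simp [hIr] at h1
    simp [Real.pi_ne_zero, hI] at h1
  have hinj : Set.InjOn f ↑T := by
    rintro ⟨I, J⟩ hm ⟨I', J'⟩ hm' heq
    simp only [hT, Finset.coe_product, Set.mem_prod, Finset.coe_erase, Set.mem_diff,
      Finset.mem_coe, Set.mem_singleton_iff] at hm hm'
    have hI : I ≠ 0 := hm.1.2
    have e1 : 2 * π * (I:ℝ) / M = 2 * π * (I':ℝ) / M := congrArg Prod.fst heq
    have e2 := congrArg Prod.snd heq
    have hII : I = I' := by field_simp at e1; exact_mod_cast e1
    subst hII
    have hx : (2*π*(I:ℝ)/M) ≠ 0 := by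
      apply div_ne_zero _ hMr
      exact mul_ne_zero (mul_ne_zero two_ne_zero Real.pi_ne_zero) (Int.cast_ne_zero.2 hI)
    have := mul_left_cancel₀ hx e2
    field_simp at this
    have : J = J' := by exact_mod_cast this
    simp [this]
  rw [hset, Set.ncard_insert_of_notMem hnot (T.finite_toSet.image f),
    Set.ncard_image_of_injOn hinj, Set.ncard_coe_finset, hT, Finset.card_product,
    Finset.card_erase_of_mem (by simp [ha, hb]), Int.card_Icc, Int.card_Icc]
  have h1 : (b + 1 - a).toNat - 1 = (b - a).toNat := by omega
  have h2 : (d + 1 - c).toNat = (d - c + 1).toNat := by omega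
  rw [h1, h2]

/-- For an even integer `M ≥ 2` and an integer `N ≥ 4` divisible by 4, the Linogram
Fourier Domain `𝔏_{M,N}` has exactly `(M−1)N + 1` distinct points. -/
theorem LFD_card (M N : ℕ) (hM : 2 ≤ M) (hN : 4 ≤ N) (hMe : Even M) (hN4 : 4 ∣ N) :
    (LFD M N).ncard = (M - 1) * N + 1 := by
  obtain ⟨m, hm⟩ : ∃ m, M = 2 * m := hMe.exists_two_nsmul M
  obtain ⟨n, hn⟩ : ∃ n, N = 4 * n := hN4
  have hm1 : 1 ≤ m := by omega
  have hn1 : 1 ≤ n := by omega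
  have hmz : (M:ℤ) = 2 * m := by exact_mod_cast hm
  have hnz : (N:ℤ) = 4 * n := by exact_mod_cast hn
  have hMr : (M:ℝ) ≠ 0 := Nat.cast_ne_zero.2 (by omega)
  have hNr : (N:ℝ) ≠ 0 := Nat.cast_ne_zero.2 (by omega)
  have e1 : -(M:ℤ)/2 = -(m:ℤ) := by omega
  have e2 : (M:ℤ)/2 - 1 = (m:ℤ) - 1 := by omega
  have e2' : (M:ℤ)/2 = (m:ℤ) := by omega
  have e3 : -(N:ℤ)/4 + 1 = 1 - (n:ℤ) := by omega
  have e3' : -(N:ℤ)/4 = -(n:ℤ) := by omega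
  have e4 : (N:ℤ)/4 = (n:ℤ) := by omega
  -- horizontal part
  have hHeq : linogramH M N = {p : ℝ × ℝ | ∃ I J : ℤ, -(m:ℤ) ≤ I ∧ I ≤ (m:ℤ) - 1 ∧
      1 - (n:ℤ) ≤ J ∧ J ≤ (n:ℤ) ∧ p = (2 * π * I / M, (2 * π * I / M) * (4 * J / N))} := by
    simp only [linogramH, e1, e2, e3, e4]
  have hVeq : linogramV M N = Prod.swap '' {p : ℝ × ℝ | ∃ I J : ℤ, 1 - (m:ℤ) ≤ I ∧ I ≤ (m:ℤ) ∧
      -(n:ℤ) ≤ J ∧ J ≤ (n:ℤ) - 1 ∧ p = (2 * π * I / M, (2 * π * I / M) * (4 * J / N))} := by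
    ext p
    constructor
    · rintro ⟨I, J, h1, h2, h3, h4, rfl⟩
      exact ⟨(2 * π * I / M, (2 * π * I / M) * (4 * J / N)),
        ⟨I, J, by omega, by omega, by omega, by omega, rfl⟩, rfl⟩
    · rintro ⟨q, ⟨I, J, h1, h2, h3, h4, rfl⟩, rfl⟩
      exact ⟨I, J, by omega, by omega, by omega, by omega, rfl⟩
  have hfinH : (linogramH M N).Finite := by rw [hHeq]; exact finite_param M N _ _ _ _
  have hfinV : (linogramV M N).Finite := by
    rw [hVeq]; exact (finite_param M N _ _ _ _).image _
  have cH : (linogramH M N).ncard = (2*m - 1) * (2*n) + 1 := by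
    rw [hHeq, ncard_param M N (by omega) (by omega) _ _ _ _ (by omega) (by omega) (by omega)]
    have t1 : ((m:ℤ) - 1 - -(m:ℤ)).toNat = 2*m - 1 := by omega
    have t2 : ((n:ℤ) - (1 - (n:ℤ)) + 1).toNat = 2*n := by omega
    rw [t1, t2]
  have cV : (linogramV M N).ncard = (2*m - 1) * (2*n) + 1 := by
    rw [hVeq, Set.ncard_image_of_injective _ Prod.swap_injective,
      ncard_param M N (by omega) (by omega) _ _ _ _ (by omega) (by omega) (by omega)]
    have t1 : ((m:ℤ) - (1 - (m:ℤ))).toNat = 2*m - 1 := by omega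
    have t2 : ((n:ℤ) - 1 - -(n:ℤ) + 1).toNat = 2*n := by omega
    rw [t1, t2]
  -- intersection
  have hInter : linogramH M N ∩ linogramV M N = {((0:ℝ), (0:ℝ))} := by
    ext p
    constructor
    · rintro ⟨⟨I, J, h1, h2, h3, h4, rfl⟩, ⟨I', J', g1, g2, g3, g4, heq⟩⟩
      rcases eq_or_ne I 0 with rfl | hI
      · simp
      · exfalso
        have hx : (2*π*(I:ℝ)/M) ≠ 0 := by
          apply div_ne_zero _ hMr
          exact mul_ne_zero (mul_ne_zero two_ne_zero Real.pi_ne_zero) (Int.cast_ne_zero.2 hI)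
        have f1 : 2 * π * (I:ℝ) / M = (2 * π * (I':ℝ) / M) * (4 * (J':ℝ) / N) :=
          congrArg Prod.fst heq
        have f2 : (2 * π * (I:ℝ) / M) * (4 * (J:ℝ) / N) = 2 * π * (I':ℝ) / M :=
          congrArg Prod.snd heq
        have f3 : (2 * π * (I:ℝ) / M) * 1
            = (2 * π * (I:ℝ) / M) * ((4 * (J:ℝ) / N) * (4 * (J':ℝ) / N)) := by
          calc (2 * π * (I:ℝ) / M) * 1 = 2 * π * (I:ℝ) / M := mul_one _
            _ = (2 * π * (I':ℝ) / M) * (4 * (J':ℝ) / N) := f1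
            _ = ((2 * π * (I:ℝ) / M) * (4 * (J:ℝ) / N)) * (4 * (J':ℝ) / N) := by rw [f2]
            _ = (2 * π * (I:ℝ) / M) * ((4 * (J:ℝ) / N) * (4 * (J':ℝ) / N)) := by ring
        have f4 : (4 * (J:ℝ) / N) * (4 * (J':ℝ) / N) = 1 := (mul_left_cancel₀ hx f3).symm
        have f5 : 16 * (J:ℝ) * J' = (N:ℝ)^2 := by field_simp at f4; linarith
        have f6 : 16 * J * J' = (N:ℤ)^2 := by exact_mod_cast f5
        nlinarith [mul_nonneg (show (0:ℤ) ≤ (n:ℤ) + J' by omega)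
            (show (0:ℤ) ≤ (n:ℤ) - J by omega),
          mul_nonneg (show (0:ℤ) ≤ (n:ℤ) - 1 - J' by omega)
            (show (0:ℤ) ≤ (n:ℤ) - 1 + J by omega), hnz, hn1]
    · rintro (rfl : p = ((0:ℝ), (0:ℝ)))
      refine ⟨⟨0, (N:ℤ)/4, by omega, by omega, by omega, le_refl _, by simp⟩,
        ⟨0, 0, by omega, by omega, by omega, by omega, by simp⟩⟩
  have key := Set.ncard_union_add_ncard_inter (linogramH M N) (linogramV M N) hfinH hfinV
  rw [hInter, Set.ncard_singleton, cH, cV] at key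
  have : (M - 1) * N = (2*m - 1) * (2*n) + (2*m - 1) * (2*n) := by
    have hM1 : M - 1 = 2*m - 1 := by omega
    rw [hM1, hn]
    obtain ⟨k, rfl⟩ : ∃ k, m = k + 1 := ⟨m - 1, by omega⟩
    ring_nf
  unfold LFD
  omega
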